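/- Let x ∈ ℝ^m have support N := {i : x_i ≠ 0}, let T ⊆ {1,…,m}, Δ := N \ T, Δ_e := T \ N, and y = A x + w with ‖w‖₂ ≤ ε. Assume |N| ≤ S_N, |Δ_e| ≤ S_{Δe}, |Δ| ≤ S_Δ, and that some δ < (√2 − 1)/2 is an (S_N + S_{Δe} + S_Δ)-restricted isometry bound for A. Let x̂ be a modified-CS estimate with known part T from y, let α_add ≥ 0, and let Δ₁ := {i ∈ Δ : |x_i| ≥ b₁}. If b₁ > α_add + 8.79ε, then every i ∈ Δ₁ satisfies |x̂_i| > α_add, i.e., every element of Δ₁ is detected by the threshold-α_add addition step. -/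

import Mathlib

open Finset

attribute [local instance] Classical.propDecidable

/-- Euclidean (ℓ2) norm of a finite real vector. -/
noncomputable def norm2 {k : ℕ} (v : Fin k → ℝ) : ℝ := Real.sqrt (∑ i, v i ^ 2)

/-- ℓ∞ norm (maximum absolute entry) of a finite real vector. -/
noncomputable def normInf {k : ℕ} (v : Fin k → ℝ) : ℝ := ⨆ i, |v i|

/-- Support of a vector, as a finset. -/
noncomputable def spt {k : ℕ} (v : Fin k → ℝ) : Finset (Fin k) :=
  Finset.univ.filter (fun i => v i ≠ 0)

/-- Restriction of a vector to the coordinates indexed by `T` (zero elsewhere). -/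
noncomputable def restr {k : ℕ} (T : Finset (Fin k)) (v : Fin k → ℝ) : Fin k → ℝ :=
  fun i => if i ∈ T then v i else 0

/-- `δ ∈ [0,1)` is an `S`-restricted isometry bound for `A`:
`(1-δ)‖z‖² ≤ ‖Az‖² ≤ (1+δ)‖z‖²` for every `z` with at most `S` nonzero entries. -/
def RIPBound {n m : ℕ} (A : Matrix (Fin n) (Fin m) ℝ) (S : ℕ) (δ : ℝ) : Prop :=
  0 ≤ δ ∧ δ < 1 ∧
    ∀ z : Fin m → ℝ, (spt z).card ≤ S →
      (1 - δ) * (∑ i, z i ^ 2) ≤ (∑ j, (A.mulVec z) j ^ 2) ∧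
      (∑ j, (A.mulVec z) j ^ 2) ≤ (1 + δ) * (∑ i, z i ^ 2)

/-- `θ ≥ 0` is an `(S,S')`-restricted orthogonality bound for `A`:
`|⟨Az, Az'⟩| ≤ θ‖z‖‖z'‖` for all `z, z'` with disjoint supports of cardinalities `≤ S, S'`. -/
def ROBound {n m : ℕ} (A : Matrix (Fin n) (Fin m) ℝ) (S S' : ℕ) (θ : ℝ) : Prop :=
  0 ≤ θ ∧
    ∀ z z' : Fin m → ℝ, Disjoint (spt z) (spt z') →
      (spt z).card ≤ S → (spt z').card ≤ S' →
      |∑ j, (A.mulVec z) j * (A.mulVec z') j| ≤ θ * norm2 z * norm2 z'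

/-- A modified-CS estimate with known part `T`: feasible and with minimal ℓ1 norm outside `T`
among all feasible vectors. -/
def ModCS {n m : ℕ} (A : Matrix (Fin n) (Fin m) ℝ) (y : Fin n → ℝ) (ε : ℝ)
    (T : Finset (Fin m)) (xhat : Fin m → ℝ) : Prop :=
  norm2 (fun j => y j - (A.mulVec xhat) j) ≤ ε ∧
    ∀ β : Fin m → ℝ, norm2 (fun j => y j - (A.mulVec β) j) ≤ ε →
      ∑ i ∈ Tᶜ, |xhat i| ≤ ∑ i ∈ Tᶜ, |β i|

/-- The LS estimate on `T` from `y`: supported on `T` and satisfying the normal equations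
`A_Tᵀ (y - A x̂) = 0` (equivalently `x̂_T = (A_Tᵀ A_T)⁻¹ A_Tᵀ y` when `A_T` has
full column rank). -/
def IsLS {n m : ℕ} (A : Matrix (Fin n) (Fin m) ℝ) (y : Fin n → ℝ)
    (T : Finset (Fin m)) (xhat : Fin m → ℝ) : Prop :=
  (∀ i, i ∉ T → xhat i = 0) ∧
    ∀ i ∈ T, (∑ j, A j i * (y j - (A.mulVec xhat) j)) = 0

/-- `C₁(δ) = 4√(1+δ)/(1-(√2+1)δ)`. -/
noncomputable def C1 (δ : ℝ) : ℝ := 4 * Real.sqrt (1 + δ) / (1 - (Real.sqrt 2 + 1) * δ)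

/-- `C₂(δ) = 2(1+(√2-1)δ)/(1-(√2+1)δ)`. -/
noncomputable def C2 (δ : ℝ) : ℝ := 2 * (1 + (Real.sqrt 2 - 1) * δ) / (1 - (Real.sqrt 2 + 1) * δ)

section CSaux

variable {k : ℕ}

lemma CS_mem_spt {v : Fin k → ℝ} {i : Fin k} : i ∈ spt v ↔ v i ≠ 0 := by
  simp [spt]

lemma CS_norm2_nonneg (v : Fin k → ℝ) : 0 ≤ norm2 v := Real.sqrt_nonneg _

lemma CS_sq_norm2 (v : Fin k → ℝ) : norm2 v ^ 2 = ∑ i, v i ^ 2 :=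
  Real.sq_sqrt (by positivity)

lemma CS_norm2_le_of_sq_le {v : Fin k → ℝ} {c : ℝ} (hc : 0 ≤ c)
    (h : ∑ i, v i ^ 2 ≤ c ^ 2) : norm2 v ≤ c :=
  le_trans (Real.sqrt_le_sqrt h) (le_of_eq (Real.sqrt_sq hc))

lemma CS_abs_le_norm2 (v : Fin k → ℝ) (i : Fin k) : |v i| ≤ norm2 v := by
  rw [norm2, ← Real.sqrt_sq_eq_abs]
  exact Real.sqrt_le_sqrt (Finset.single_le_sum (f := fun j => v j ^ 2)
    (fun j _ => sq_nonneg _) (Finset.mem_univ i))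

lemma CS_inner_le (f g : Fin k → ℝ) : |∑ i, f i * g i| ≤ norm2 f * norm2 g := by
  rw [← Real.sqrt_sq_eq_abs, norm2, norm2, ← Real.sqrt_mul (by positivity)]
  exact Real.sqrt_le_sqrt (Finset.sum_mul_sq_le_sq_mul_sq Finset.univ f g)

lemma CS_norm2_add_le (f g : Fin k → ℝ) :
    norm2 (fun i => f i + g i) ≤ norm2 f + norm2 g := by
  apply CS_norm2_le_of_sq_le (add_nonneg (CS_norm2_nonneg f) (CS_norm2_nonneg g))
  have e : ∑ i, (f i + g i) ^ 2
      = (∑ i, f i ^ 2) + 2 * (∑ i, f i * g i) + ∑ i, g i ^ 2 := by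
    simp [add_sq, Finset.sum_add_distrib, Finset.mul_sum, mul_assoc]
  rw [e]
  nlinarith [CS_sq_norm2 f, CS_sq_norm2 g,
    le_trans (le_abs_self (∑ i, f i * g i)) (CS_inner_le f g)]

lemma CS_spt_restr (D : Finset (Fin k)) (v : Fin k → ℝ) : spt (restr D v) ⊆ D := by
  intro i hi
  rw [CS_mem_spt] at hi
  by_contra h
  simp [restr, h] at hi

lemma CS_sum_sq_restr (D : Finset (Fin k)) (v : Fin k → ℝ) :
    ∑ i, restr D v i ^ 2 = ∑ i ∈ D, v i ^ 2 := by
  have e : ∀ i, restr D v i ^ 2 = if i ∈ D then v i ^ 2 else 0 := by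
    intro i; by_cases h : i ∈ D <;> simp [restr, h]
  simp only [e]
  simp [Finset.sum_ite_mem]

lemma CS_norm2_eq_zero {v : Fin k → ℝ} (h : norm2 v = 0) : v = 0 := by
  funext i
  have hnn : (0:ℝ) ≤ ∑ j, v j ^ 2 := by positivity
  have h0 : ∑ j, v j ^ 2 = 0 := le_antisymm (Real.sqrt_eq_zero'.1 h) hnn
  have := (Finset.sum_eq_zero_iff_of_nonneg (fun j _ => sq_nonneg (v j))).1 h0 i
    (Finset.mem_univ i)
  exact pow_eq_zero_iff two_ne_zero |>.1 this

lemma CS_spt_subset_of_add {z z' : Fin k → ℝ} :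
    spt (fun i => z i + z' i) ⊆ spt z ∪ spt z' := by
  intro i hi
  rw [CS_mem_spt] at hi
  rw [Finset.mem_union, CS_mem_spt, CS_mem_spt]
  by_contra hc
  push_neg at hc
  simp [hc.1, hc.2] at hi

lemma CS_polar_raw {n m : ℕ} {A : Matrix (Fin n) (Fin m) ℝ} {S : ℕ} {δ : ℝ}
    (hR : RIPBound A S δ) (z z' : Fin m → ℝ)
    (hdisj : Disjoint (spt z) (spt z'))
    (hcard : (spt z).card + (spt z').card ≤ S) :
    |∑ j, A.mulVec z j * A.mulVec z' j| ≤ δ * ((∑ i, z i ^ 2) + (∑ i, z' i ^ 2)) / 2 := by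
  obtain ⟨hδ0, hδ1, hA⟩ := hR
  have hzero : ∀ i, z i * z' i = 0 := by
    intro i
    by_cases h : z i = 0
    · simp [h]
    · have h1 : i ∈ spt z := CS_mem_spt.2 h
      have h2 : i ∉ spt z' := Finset.disjoint_left.1 hdisj h1
      rw [CS_mem_spt, not_not] at h2
      simp [h2]
  have hcross : ∑ i, z i * z' i = 0 := Finset.sum_eq_zero fun i _ => hzero i
  have hsub : ∀ c : ℝ, (spt (fun i => z i + c * z' i)).card ≤ S := by
    intro c
    have h1 : spt (fun i => z i + c * z' i) ⊆ spt z ∪ spt z' := by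
      refine subset_trans CS_spt_subset_of_add ?_
      apply Finset.union_subset_union (subset_refl _)
      intro i hi
      rw [CS_mem_spt] at hi ⊢
      intro h0; exact hi (by simp [h0])
    calc (spt (fun i => z i + c * z' i)).card ≤ (spt z ∪ spt z').card :=
          Finset.card_le_card h1
      _ ≤ (spt z).card + (spt z').card := Finset.card_union_le _ _
      _ ≤ S := hcard
  have hmv : ∀ c : ℝ, ∀ j, A.mulVec (fun i => z i + c * z' i) j
      = A.mulVec z j + c * A.mulVec z' j := by
    intro c j
    simp only [Matrix.mulVec, dotProduct]
    rw [Finset.mul_sum, ← Finset.sum_add_distrib]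
    congr 1; funext i; ring
  have hsq : ∀ c : ℝ, ∑ i, (z i + c * z' i) ^ 2
      = (∑ i, z i ^ 2) + c ^ 2 * ∑ i, z' i ^ 2 := by
    intro c
    have : ∀ i, (z i + c * z' i) ^ 2
        = z i ^ 2 + 2 * c * (z i * z' i) + c ^ 2 * z' i ^ 2 := fun i => by ring
    simp only [this, Finset.sum_add_distrib, ← Finset.mul_sum, hcross]
    ring
  have hAsq : ∀ c : ℝ, ∑ j, (A.mulVec (fun i => z i + c * z' i)) j ^ 2
      = (∑ j, A.mulVec z j ^ 2) + 2 * c * (∑ j, A.mulVec z j * A.mulVec z' j)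
        + c ^ 2 * ∑ j, A.mulVec z' j ^ 2 := by
    intro c
    have : ∀ j, (A.mulVec (fun i => z i + c * z' i)) j ^ 2
        = A.mulVec z j ^ 2 + 2 * c * (A.mulVec z j * A.mulVec z' j)
          + c ^ 2 * A.mulVec z' j ^ 2 := by
      intro j; rw [hmv c j]; ring
    simp only [this, Finset.sum_add_distrib, ← Finset.mul_sum]
  have hp := hA _ (hsub 1)
  have hm := hA _ (hsub (-1))
  rw [hAsq 1, hsq 1] at hp
  rw [hAsq (-1), hsq (-1)] at hm
  rw [abs_le]
  constructor <;> nlinarith [hp.1, hp.2, hm.1, hm.2]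

lemma CS_polar {n m : ℕ} {A : Matrix (Fin n) (Fin m) ℝ} {S : ℕ} {δ : ℝ}
    (hR : RIPBound A S δ) (z z' : Fin m → ℝ)
    (hdisj : Disjoint (spt z) (spt z'))
    (hcard : (spt z).card + (spt z').card ≤ S) :
    |∑ j, A.mulVec z j * A.mulVec z' j| ≤ δ * norm2 z * norm2 z' := by
  rcases eq_or_lt_of_le (CS_norm2_nonneg z) with h0 | hp
  · have hz : z = 0 := CS_norm2_eq_zero h0.symm
    subst hz
    simp [Matrix.mulVec_zero, ← h0]
  rcases eq_or_lt_of_le (CS_norm2_nonneg z') with h0' | hq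
  · have hz : z' = 0 := CS_norm2_eq_zero h0'.symm
    subst hz
    simp [Matrix.mulVec_zero, ← h0']
  set p := norm2 z with hpdef
  set q := norm2 z' with hqdef
  set zz : Fin m → ℝ := fun i => p⁻¹ * z i with hzz
  set zz' : Fin m → ℝ := fun i => q⁻¹ * z' i with hzz'
  have hsptz : spt zz ⊆ spt z := by
    intro i hi; rw [CS_mem_spt] at hi ⊢; intro h; apply hi; simp [hzz, h]
  have hsptz' : spt zz' ⊆ spt z' := by
    intro i hi; rw [CS_mem_spt] at hi ⊢; intro h; apply hi; simp [hzz', h]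
  have hdisj2 : Disjoint (spt zz) (spt zz') :=
    Finset.disjoint_of_subset_left hsptz (Finset.disjoint_of_subset_right hsptz' hdisj)
  have hcard2 : (spt zz).card + (spt zz').card ≤ S :=
    le_trans (Nat.add_le_add (Finset.card_le_card hsptz) (Finset.card_le_card hsptz')) hcard
  have hsq1 : ∑ i, zz i ^ 2 = 1 := by
    have h1 : ∑ i, zz i ^ 2 = p⁻¹ ^ 2 * ∑ i, z i ^ 2 := by
      simp [hzz, Finset.mul_sum, mul_pow]
    rw [h1, ← CS_sq_norm2 z, ← hpdef]
    field_simp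
  have hsq2 : ∑ i, zz' i ^ 2 = 1 := by
    have h1 : ∑ i, zz' i ^ 2 = q⁻¹ ^ 2 * ∑ i, z' i ^ 2 := by
      simp [hzz', Finset.mul_sum, mul_pow]
    rw [h1, ← CS_sq_norm2 z', ← hqdef]
    field_simp
  have hraw := CS_polar_raw hR zz zz' hdisj2 hcard2
  rw [hsq1, hsq2] at hraw
  have hmvz : ∀ j, A.mulVec zz j = p⁻¹ * A.mulVec z j := by
    intro j
    simp only [Matrix.mulVec, dotProduct, hzz, Finset.mul_sum]
    congr 1; funext i; ring
  have hmvz' : ∀ j, A.mulVec zz' j = q⁻¹ * A.mulVec z' j := by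
    intro j
    simp only [Matrix.mulVec, dotProduct, hzz', Finset.mul_sum]
    congr 1; funext i; ring
  have hsum : ∑ j, A.mulVec zz j * A.mulVec zz' j
      = p⁻¹ * q⁻¹ * ∑ j, A.mulVec z j * A.mulVec z' j := by
    rw [Finset.mul_sum]
    congr 1; funext j; rw [hmvz j, hmvz' j]; ring
  rw [hsum, abs_mul, abs_of_pos (by positivity : (0:ℝ) < p⁻¹ * q⁻¹)] at hraw
  have : δ * (1 + 1) / 2 = δ := by ring
  rw [this] at hraw
  calc |∑ j, A.mulVec z j * A.mulVec z' j|
      = p * q * (p⁻¹ * q⁻¹ * |∑ j, A.mulVec z j * A.mulVec z' j|) := by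
        field_simp
    _ ≤ p * q * δ := by
        apply mul_le_mul_of_nonneg_left hraw (by positivity)
    _ = δ * norm2 z * norm2 z' := by rw [hpdef, hqdef]; ring

lemma CS_exists_top {m : ℕ} (g : Fin m → ℝ) :
    ∀ (s : ℕ) (E : Finset (Fin m)), s ≤ E.card →
      ∃ D, D ⊆ E ∧ D.card = s ∧ ∀ i ∈ D, ∀ j ∈ E \ D, g j ≤ g i := by
  intro s
  induction s with
  | zero => intro E _; exact ⟨∅, Finset.empty_subset _, rfl, by simp⟩
  | succ s ih =>
    intro E hs
    obtain ⟨D, hDE, hcard, htop⟩ := ih E (le_trans (Nat.le_succ s) hs)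
    have hne : (E \ D).Nonempty := by
      rw [← Finset.card_pos, Finset.card_sdiff_of_subset hDE]; omega
    obtain ⟨j0, hj0, hmax⟩ := Finset.exists_max_image (E \ D) g hne
    refine ⟨insert j0 D, ?_, ?_, ?_⟩
    · exact Finset.insert_subset (Finset.mem_sdiff.1 hj0).1 hDE
    · rw [Finset.card_insert_of_notMem (Finset.mem_sdiff.1 hj0).2, hcard]
    · intro i hi j hj
      have hjE : j ∈ E \ D := by
        rw [Finset.mem_sdiff] at hj ⊢
        exact ⟨hj.1, fun h => hj.2 (Finset.mem_insert_of_mem h)⟩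
      rcases Finset.mem_insert.1 hi with rfl | hiD
      · exact hmax j hjE
      · exact htop i hiD j hjE

lemma CS_chunk {m : ℕ} (f : (Fin m → ℝ) → ℝ)
    (hadd : ∀ z z', f (fun i => z i + z' i) = f z + f z')
    (c : ℝ) (hc : 0 ≤ c) (s : ℕ) (hs : 1 ≤ s) (h : Fin m → ℝ) (G : Finset (Fin m))
    (hb : ∀ D ⊆ G, D.card ≤ s → |f (restr D h)| ≤ c * norm2 (restr D h)) :
    ∀ E, E ⊆ G → ∀ t, 0 ≤ t → (∀ i ∈ E, |h i| ≤ t) →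
      |f (restr E h)| ≤ c * (Real.sqrt s * t + (Real.sqrt s)⁻¹ * ∑ i ∈ E, |h i|) := by
  have hsqs : (0:ℝ) < Real.sqrt s := Real.sqrt_pos.2 (by exact_mod_cast hs)
  have habs : ∀ (D : Finset (Fin m)) (t : ℝ), 0 ≤ t → (∀ i ∈ D, |h i| ≤ t) →
      D.card ≤ s → norm2 (restr D h) ≤ Real.sqrt s * t := by
    intro D t ht hDt hcard
    apply CS_norm2_le_of_sq_le (by positivity)
    rw [CS_sum_sq_restr]
    calc ∑ i ∈ D, h i ^ 2 ≤ ∑ i ∈ D, t ^ 2 := by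
          apply Finset.sum_le_sum
          intro i hi
          rw [← sq_abs (h i)]
          exact pow_le_pow_left₀ (abs_nonneg _) (hDt i hi) 2
      _ = D.card * t ^ 2 := by rw [Finset.sum_const, nsmul_eq_mul]
      _ ≤ s * t ^ 2 := by
          apply mul_le_mul_of_nonneg_right _ (sq_nonneg t)
          exact_mod_cast hcard
      _ = (Real.sqrt s * t) ^ 2 := by
          rw [mul_pow, Real.sq_sqrt (by positivity : (0:ℝ) ≤ (s:ℝ))]
  intro E
  induction E using Finset.strongInduction with
  | _ E ihE =>
    intro hEG t ht hle
    by_cases hcard : E.card ≤ s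
    · have h1 := hb E hEG hcard
      have h2 := habs E t ht hle hcard
      have h3 : (0:ℝ) ≤ (Real.sqrt s)⁻¹ * ∑ i ∈ E, |h i| := by positivity
      calc |f (restr E h)| ≤ c * norm2 (restr E h) := h1
        _ ≤ c * (Real.sqrt s * t) := mul_le_mul_of_nonneg_left h2 hc
        _ ≤ c * (Real.sqrt s * t + (Real.sqrt s)⁻¹ * ∑ i ∈ E, |h i|) := by nlinarith
    · push_neg at hcard
      obtain ⟨D, hDE, hDcard, htop⟩ := CS_exists_top (fun i => |h i|) s E (le_of_lt hcard)
      have hDne : D.Nonempty := by rw [← Finset.card_pos, hDcard]; omega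
      obtain ⟨i0, hi0, hmin⟩ := Finset.exists_min_image D (fun i => |h i|) hDne
      set t' := |h i0| with ht'def
      have ht'0 : 0 ≤ t' := abs_nonneg _
      have hEt' : ∀ j ∈ E \ D, |h j| ≤ t' := fun j hj => htop i0 hi0 j hj
      have hst' : (s:ℝ) * t' ≤ ∑ i ∈ D, |h i| := by
        calc (s:ℝ) * t' = ∑ _i ∈ D, t' := by
              rw [Finset.sum_const, hDcard]; simp [mul_comm]
          _ ≤ ∑ i ∈ D, |h i| := Finset.sum_le_sum fun i hi => hmin i hi
      have hsplit : restr E h = fun i => restr D h i + restr (E \ D) h i := by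
        funext i
        by_cases hiD : i ∈ D
        · have hiE : i ∈ E := hDE hiD
          simp [restr, hiE, hiD, Finset.mem_sdiff]
        · by_cases hiE : i ∈ E
          · simp [restr, hiE, hiD, Finset.mem_sdiff]
          · simp [restr, hiE, hiD, Finset.mem_sdiff]
      have hssub : E \ D ⊂ E := Finset.sdiff_ssubset hDE hDne
      have hIH := ihE (E \ D) hssub (le_trans (Finset.sdiff_subset) hEG) t' ht'0 hEt'
      have hdir : |f (restr D h)| ≤ c * (Real.sqrt s * t) := by
        calc |f (restr D h)| ≤ c * norm2 (restr D h) := hb D (le_trans hDE hEG) (le_of_eq hDcard)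
          _ ≤ c * (Real.sqrt s * t) :=
            mul_le_mul_of_nonneg_left
              (habs D t ht (fun i hi => hle i (hDE hi)) (le_of_eq hDcard)) hc
      have hkey : Real.sqrt s * t' ≤ (Real.sqrt s)⁻¹ * ∑ i ∈ D, |h i| := by
        have e : Real.sqrt s * t' = (Real.sqrt s)⁻¹ * ((s:ℝ) * t') := by
          field_simp
          linear_combination t' * Real.mul_self_sqrt (by positivity : (0:ℝ) ≤ (s:ℝ))
        rw [e]
        exact mul_le_mul_of_nonneg_left hst' (by positivity)
      have hsum : ∑ i ∈ E \ D, |h i| + ∑ i ∈ D, |h i| = ∑ i ∈ E, |h i| :=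
        Finset.sum_sdiff hDE
      rw [hsplit, hadd]
      calc |f (restr D h) + f (restr (E \ D) h)|
          ≤ |f (restr D h)| + |f (restr (E \ D) h)| := abs_add_le _ _
        _ ≤ c * (Real.sqrt s * t) + c * (Real.sqrt s * t' + (Real.sqrt s)⁻¹ * ∑ i ∈ E \ D, |h i|) := by
            exact add_le_add hdir hIH
        _ ≤ c * (Real.sqrt s * t + (Real.sqrt s)⁻¹ * ∑ i ∈ E, |h i|) := by
            rw [← hsum]
            have := mul_le_mul_of_nonneg_left hkey hc
            nlinarith [mul_le_mul_of_nonneg_left hkey hc]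

end CSaux

set_option maxHeartbeats 1000000 in
/-- detection condition for the addition step of modified-CS (Lemma 3). -/
theorem modCS_detection_condition {n m : ℕ} (A : Matrix (Fin n) (Fin m) ℝ)
    (x : Fin m → ℝ) (w : Fin n → ℝ) (ε δ αadd b1 : ℝ) (T : Finset (Fin m))
    (SN SΔe SΔ : ℕ)
    (hw : norm2 w ≤ ε)
    (hN : (spt x).card ≤ SN)
    (hΔe : (T \ spt x).card ≤ SΔe)
    (hΔ : (spt x \ T).card ≤ SΔ)
    (hδ : δ < (Real.sqrt 2 - 1) / 2)
    (hRIP : RIPBound A (SN + SΔe + SΔ) δ)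
    (xhat : Fin m → ℝ)
    (hxhat : ModCS A (fun j => (A.mulVec x) j + w j) ε T xhat)
    (hαadd : 0 ≤ αadd)
    (hb1 : b1 > αadd + 8.79 * ε) :
    ∀ i ∈ spt x \ T, b1 ≤ |x i| → αadd < |xhat i| := by
  intro i hiΔ hbi
  classical
  obtain ⟨hδ0, hδ1, hA⟩ := hRIP
  set N : Finset (Fin m) := spt x with hNdef
  set Δ : Finset (Fin m) := spt x \ T with hΔdef
  set h : Fin m → ℝ := fun i => xhat i - x i with hhdef
  set d : ℕ := Δ.card with hddef
  have hΔne : Δ.Nonempty := ⟨i, hiΔ⟩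
  have hd1 : 1 ≤ d := Finset.card_pos.2 hΔne
  have hiN : i ∈ N := (Finset.mem_sdiff.1 hiΔ).1
  have hε0 : 0 ≤ ε := le_trans (CS_norm2_nonneg w) hw
  -- feasibility of x and the cone condition
  have hfx : norm2 (fun j => ((A.mulVec x) j + w j) - (A.mulVec x) j) ≤ ε := by
    have e : (fun j => ((A.mulVec x) j + w j) - (A.mulVec x) j) = w := by funext j; ring
    rw [e]; exact hw
  have hcone := hxhat.2 x hfx
  -- ‖Ah‖ ≤ 2ε
  have hmvh : ∀ j, A.mulVec h j = A.mulVec xhat j - A.mulVec x j := by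
    intro j
    simp only [Matrix.mulVec, dotProduct, hhdef]
    rw [← Finset.sum_sub_distrib]
    exact Finset.sum_congr rfl fun l _ => by ring
  set g : Fin n → ℝ := fun j => ((A.mulVec x) j + w j) - A.mulVec xhat j with hgdef
  have hfeas : norm2 g ≤ ε := hxhat.1
  have hAh : norm2 (A.mulVec h) ≤ 2 * ε := by
    have e : A.mulVec h = fun j => w j + (-(g j)) := by
      funext j; rw [hmvh j, hgdef]; ring
    have hneg : norm2 (fun j => -(g j)) = norm2 g := by
      simp [norm2, neg_sq]
    calc norm2 (A.mulVec h) = norm2 (fun j => w j + (-(g j))) := by rw [e]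
      _ ≤ norm2 w + norm2 (fun j => -(g j)) := CS_norm2_add_le _ _
      _ = norm2 w + norm2 g := by rw [hneg]
      _ ≤ 2 * ε := by linarith [hfeas, hw]
  -- sets
  set T0 : Finset (Fin m) := T ∪ N with hT0def
  set E0 : Finset (Fin m) := T0ᶜ with hE0def
  have hΔT0 : Δ ⊆ T0 := fun j hj => Finset.mem_union_right _ (Finset.mem_sdiff.1 hj).1
  have hTcomp : Tᶜ = Δ ∪ E0 := by
    ext j
    simp only [hE0def, hT0def, hΔdef, Finset.mem_compl, Finset.mem_union,
      Finset.mem_sdiff, hNdef]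
    tauto
  have hdisjΔE0 : Disjoint Δ E0 := disjoint_compl_right.mono_left hΔT0
  have hx0 : ∀ j ∈ E0, x j = 0 := by
    intro j hj
    by_contra hne
    have : j ∈ N := CS_mem_spt.2 hne
    exact (Finset.mem_compl.1 hj) (Finset.mem_union_right _ this)
  have hconeE : ∑ j ∈ E0, |h j| ≤ ∑ j ∈ Δ, |h j| := by
    have e1 : ∑ j ∈ Tᶜ, |xhat j| = ∑ j ∈ Δ, |xhat j| + ∑ j ∈ E0, |h j| := by
      rw [hTcomp, Finset.sum_union hdisjΔE0]
      congr 1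
      refine Finset.sum_congr rfl fun j hj => ?_
      rw [hhdef]
      simp [hx0 j hj]
    have e2 : ∑ j ∈ Tᶜ, |x j| = ∑ j ∈ Δ, |x j| := by
      rw [hTcomp, Finset.sum_union hdisjΔE0]
      have e0 : ∑ j ∈ E0, |x j| = 0 :=
        Finset.sum_eq_zero fun j hj => by rw [hx0 j hj]; simp
      rw [e0, add_zero]
    have e3 : ∑ j ∈ Δ, |x j| ≤ ∑ j ∈ Δ, |xhat j| + ∑ j ∈ Δ, |h j| := by
      rw [← Finset.sum_add_distrib]
      refine Finset.sum_le_sum fun j _ => ?_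
      have e : x j = xhat j - h j := by rw [hhdef]; ring
      rw [e, sub_eq_add_neg]
      calc |xhat j + -(h j)| ≤ |xhat j| + |-(h j)| := abs_add_le _ _
        _ = |xhat j| + |h j| := by rw [abs_neg]
    linarith [hcone, e1, e2, e3]
  -- ℓ1 to ℓ2 on Δ
  have hsqd : (0:ℝ) < Real.sqrt d := Real.sqrt_pos.2 (by exact_mod_cast hd1)
  have hl1l2 : ∑ j ∈ Δ, |h j| ≤ Real.sqrt d * norm2 (restr Δ h) := by
    have cs := Real.sum_mul_le_sqrt_mul_sqrt Δ (fun _ => (1:ℝ)) (fun j => |h j|)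
    simp only [one_mul, one_pow] at cs
    have e1 : ∑ _j ∈ Δ, (1:ℝ) = (d:ℝ) := by
      rw [Finset.sum_const, nsmul_eq_mul, mul_one, hddef]
    have e2 : ∑ j ∈ Δ, |h j| ^ 2 = ∑ j, restr Δ h j ^ 2 := by
      rw [CS_sum_sq_restr]
      exact Finset.sum_congr rfl fun j _ => sq_abs _
    rw [e1, e2] at cs
    rw [norm2]
    exact cs
  -- cardinality facts
  have hT0card : T0.card ≤ SN + SΔe := by
    have e := Finset.card_sdiff_add_card T N
    have h1 : (T \ N).card ≤ SΔe := hΔe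
    have h2 : N.card ≤ SN := hN
    rw [hT0def]
    omega
  have hdSΔ : d ≤ SΔ := hΔ
  have hdSN : d ≤ SN := le_trans (Finset.card_le_card Finset.sdiff_subset) hN
  -- the top chunk Δ1 and the cross-term bound
  obtain ⟨Δ1, hΔ1E0, hΔ1card, hcross⟩ :
      ∃ Δ1, Δ1 ⊆ E0 ∧ Δ1.card ≤ d ∧
        ∀ (v : Fin m → ℝ) (V : Finset (Fin m)), spt v ⊆ V → Disjoint V (E0 \ Δ1) →
          V.card + d ≤ SN + SΔe + SΔ →
          |∑ j, A.mulVec v j * A.mulVec (restr (E0 \ Δ1) h) j|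
            ≤ δ * norm2 v * ((Real.sqrt d)⁻¹ * ∑ j ∈ E0, |h j|) := by
    rcases le_or_gt E0.card d with hc | hc
    · refine ⟨E0, Finset.Subset.refl _, hc, ?_⟩
      intro v V hv hdis hcards
      rw [Finset.sdiff_self]
      rw [show restr (∅ : Finset (Fin m)) h = 0 from funext fun j => by simp [restr]]
      rw [Matrix.mulVec_zero]
      simp only [Pi.zero_apply, mul_zero, Finset.sum_const_zero, abs_zero]
      apply mul_nonneg (mul_nonneg hδ0 (CS_norm2_nonneg v))
      apply mul_nonneg (inv_nonneg.2 (Real.sqrt_nonneg _))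
      exact Finset.sum_nonneg fun j _ => abs_nonneg _
    · obtain ⟨Δ1, hΔ1E0, hΔ1card, htop⟩ :=
        CS_exists_top (fun j => |h j|) d E0 (le_of_lt hc)
      have hΔ1ne : Δ1.Nonempty := Finset.card_pos.1 (by omega)
      obtain ⟨i0, hi0, hmin⟩ := Finset.exists_min_image Δ1 (fun j => |h j|) hΔ1ne
      refine ⟨Δ1, hΔ1E0, le_of_eq hΔ1card, ?_⟩
      intro v V hv hdis hcards
      have hbD : ∀ D ⊆ E0 \ Δ1, D.card ≤ d →
          |∑ j, A.mulVec v j * A.mulVec (restr D h) j|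
            ≤ (δ * norm2 v) * norm2 (restr D h) := by
        intro D hD hDc
        have hdisj' : Disjoint (spt v) (spt (restr D h)) :=
          Finset.disjoint_of_subset_left hv
            (Finset.disjoint_of_subset_right ((CS_spt_restr D h).trans hD) hdis)
        have hc1 : (spt v).card + (spt (restr D h)).card ≤ SN + SΔe + SΔ := by
          have := Finset.card_le_card ((CS_spt_restr D h).trans hD)
          have := Finset.card_le_card hv
          have := Finset.card_le_card (CS_spt_restr D h)
          have hDd : (spt (restr D h)).card ≤ d :=
            le_trans (Finset.card_le_card (CS_spt_restr D h)) hDc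
          have hvV : (spt v).card ≤ V.card := Finset.card_le_card hv
          omega
        exact CS_polar ⟨hδ0, hδ1, hA⟩ v (restr D h) hdisj' hc1
      have hadd' : ∀ z z' : Fin m → ℝ,
          (fun zz => ∑ j, A.mulVec v j * A.mulVec zz j) (fun i => z i + z' i)
            = (fun zz => ∑ j, A.mulVec v j * A.mulVec zz j) z
              + (fun zz => ∑ j, A.mulVec v j * A.mulVec zz j) z' := by
        intro z z'
        simp only
        rw [← Finset.sum_add_distrib]
        refine Finset.sum_congr rfl fun j _ => ?_
        have e : A.mulVec (fun i => z i + z' i) j = A.mulVec z j + A.mulVec z' j := by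
          show A.mulVec (z + z') j = _
          rw [Matrix.mulVec_add]; rfl
        rw [e]; ring
      have hch := CS_chunk (fun zz => ∑ j, A.mulVec v j * A.mulVec zz j) hadd'
        (δ * norm2 v) (mul_nonneg hδ0 (CS_norm2_nonneg v)) d hd1 h (E0 \ Δ1) hbD
        (E0 \ Δ1) (Finset.Subset.refl _) (|h i0|) (abs_nonneg _)
        (fun j hj => htop i0 hi0 j hj)
      have hkey : Real.sqrt d * |h i0| ≤ (Real.sqrt d)⁻¹ * ∑ j ∈ Δ1, |h j| := by
        have hst' : (d:ℝ) * |h i0| ≤ ∑ j ∈ Δ1, |h j| := by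
          calc (d:ℝ) * |h i0| = ∑ _j ∈ Δ1, |h i0| := by
                rw [Finset.sum_const, hΔ1card, nsmul_eq_mul]
            _ ≤ ∑ j ∈ Δ1, |h j| := Finset.sum_le_sum fun j hj => hmin j hj
        have e : Real.sqrt d * |h i0| = (Real.sqrt d)⁻¹ * ((d:ℝ) * |h i0|) := by
          field_simp
          linear_combination |h i0| * Real.mul_self_sqrt
            (by positivity : (0:ℝ) ≤ (d:ℝ))
        rw [e]
        exact mul_le_mul_of_nonneg_left hst' (by positivity)
      have hsum : (∑ j ∈ E0 \ Δ1, |h j|) + ∑ j ∈ Δ1, |h j| = ∑ j ∈ E0, |h j| :=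
        Finset.sum_sdiff hΔ1E0
      have hnn : (0:ℝ) ≤ δ * norm2 v := mul_nonneg hδ0 (CS_norm2_nonneg v)
      calc |∑ j, A.mulVec v j * A.mulVec (restr (E0 \ Δ1) h) j|
          ≤ (δ * norm2 v) * (Real.sqrt d * |h i0|
              + (Real.sqrt d)⁻¹ * ∑ j ∈ E0 \ Δ1, |h j|) := hch
        _ ≤ (δ * norm2 v) * ((Real.sqrt d)⁻¹ * ∑ j ∈ Δ1, |h j|
              + (Real.sqrt d)⁻¹ * ∑ j ∈ E0 \ Δ1, |h j|) := by
            apply mul_le_mul_of_nonneg_left _ hnn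
            linarith [hkey]
        _ = δ * norm2 v * ((Real.sqrt d)⁻¹ * ∑ j ∈ E0, |h j|) := by
            rw [← hsum]; ring
  -- main estimate
  set T01 : Finset (Fin m) := T0 ∪ Δ1 with hT01def
  set E : Finset (Fin m) := E0 \ Δ1 with hEdef
  set u : Fin m → ℝ := restr T01 h with hudef
  set r : Fin m → ℝ := restr E h with hrdef
  have hucard : (spt u).card ≤ SN + SΔe + SΔ := by
    have h1 : (spt u).card ≤ T01.card := Finset.card_le_card (CS_spt_restr _ _)
    have h2 : T01.card ≤ T0.card + Δ1.card := Finset.card_union_le _ _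
    omega
  have hdisjT0Δ1 : Disjoint T0 Δ1 := disjoint_compl_right.mono_right hΔ1E0
  have hur : h = fun j => u j + r j := by
    funext j
    by_cases hj : j ∈ T01
    · have hjE : j ∉ E := by
        rw [hEdef]
        intro hE
        rcases Finset.mem_union.1 hj with h1 | h1
        · exact (Finset.mem_compl.1 (Finset.mem_sdiff.1 hE).1) h1
        · exact (Finset.mem_sdiff.1 hE).2 h1
      simp [hudef, hrdef, restr, hj, hjE]
    · have hjE : j ∈ E := by
        rw [hEdef, Finset.mem_sdiff]
        constructor
        · rw [hE0def, Finset.mem_compl]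
          intro hT0m
          exact hj (Finset.mem_union_left _ hT0m)
        · intro h1
          exact hj (Finset.mem_union_right _ h1)
      simp [hudef, hrdef, restr, hj, hjE]
  set v1 : Fin m → ℝ := restr T0 h with hv1def
  set v2 : Fin m → ℝ := restr Δ1 h with hv2def
  have huv : ∀ j, u j = v1 j + v2 j := by
    intro j
    by_cases h1 : j ∈ T0
    · have h2 : j ∉ Δ1 := Finset.disjoint_left.1 hdisjT0Δ1 h1
      have h3 : j ∈ T01 := Finset.mem_union_left _ h1
      simp [hudef, hv1def, hv2def, restr, h1, h2, h3]
    · by_cases h2 : j ∈ Δ1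
      · have h3 : j ∈ T01 := Finset.mem_union_right _ h2
        simp [hudef, hv1def, hv2def, restr, h1, h2, h3]
      · have h3 : j ∉ T01 := by
          rw [hT01def, Finset.mem_union]
          tauto
        simp [hudef, hv1def, hv2def, restr, h1, h2, h3]
  have hP0 : 0 ≤ norm2 u := CS_norm2_nonneg u
  have hsq_split : norm2 v1 ^ 2 + norm2 v2 ^ 2 = norm2 u ^ 2 := by
    rw [CS_sq_norm2, CS_sq_norm2, CS_sq_norm2, hudef, hv1def, hv2def,
      CS_sum_sq_restr, CS_sum_sq_restr, CS_sum_sq_restr, hT01def]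
    exact (Finset.sum_union hdisjT0Δ1).symm
  have hab : norm2 v1 + norm2 v2 ≤ Real.sqrt 2 * norm2 u := by
    have h2 : (norm2 v1 + norm2 v2) ^ 2 ≤ (Real.sqrt 2 * norm2 u) ^ 2 := by
      rw [mul_pow, Real.sq_sqrt (by norm_num : (0:ℝ) ≤ 2)]
      nlinarith [sq_nonneg (norm2 v1 - norm2 v2), hsq_split]
    calc norm2 v1 + norm2 v2
        = Real.sqrt ((norm2 v1 + norm2 v2) ^ 2) :=
          (Real.sqrt_sq (add_nonneg (CS_norm2_nonneg v1) (CS_norm2_nonneg v2))).symm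
      _ ≤ Real.sqrt ((Real.sqrt 2 * norm2 u) ^ 2) := Real.sqrt_le_sqrt h2
      _ = Real.sqrt 2 * norm2 u := Real.sqrt_sq (by positivity)
  have hρP : norm2 (restr Δ h) ≤ norm2 u := by
    have hΔT01 : Δ ⊆ T01 := fun j hj => Finset.mem_union_left _ (hΔT0 hj)
    rw [hudef, norm2, norm2]
    apply Real.sqrt_le_sqrt
    rw [CS_sum_sq_restr, CS_sum_sq_restr]
    exact Finset.sum_le_sum_of_subset_of_nonneg hΔT01 fun j _ _ => sq_nonneg _
  set K : ℝ := (Real.sqrt d)⁻¹ * ∑ j ∈ E0, |h j| with hKdef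
  have hK0 : 0 ≤ K := by
    apply mul_nonneg (inv_nonneg.2 (Real.sqrt_nonneg _))
    exact Finset.sum_nonneg fun j _ => abs_nonneg _
  have hKP : K ≤ norm2 u := by
    have h1 : ∑ j ∈ E0, |h j| ≤ Real.sqrt d * norm2 (restr Δ h) :=
      le_trans hconeE hl1l2
    have h2 : K ≤ (Real.sqrt d)⁻¹ * (Real.sqrt d * norm2 (restr Δ h)) := by
      rw [hKdef]
      exact mul_le_mul_of_nonneg_left h1 (inv_nonneg.2 (Real.sqrt_nonneg _))
    have h3 : (Real.sqrt d)⁻¹ * (Real.sqrt d * norm2 (restr Δ h))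
        = norm2 (restr Δ h) := by
      field_simp
    linarith [hρP]
  -- RIP bounds on u
  have hlow : (1 - δ) * norm2 u ^ 2 ≤ ∑ j, (A.mulVec u) j ^ 2 := by
    rw [CS_sq_norm2]
    exact (hA u hucard).1
  have hAu : norm2 (A.mulVec u) ≤ Real.sqrt (1 + δ) * norm2 u := by
    apply CS_norm2_le_of_sq_le (mul_nonneg (Real.sqrt_nonneg _) hP0)
    rw [mul_pow, Real.sq_sqrt (by linarith : (0:ℝ) ≤ 1 + δ), CS_sq_norm2]
    exact (hA u hucard).2
  have hinner : ∑ j, A.mulVec u j * A.mulVec h j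
      ≤ (Real.sqrt (1 + δ) * norm2 u) * (2 * ε) := by
    calc ∑ j, A.mulVec u j * A.mulVec h j
        ≤ |∑ j, A.mulVec u j * A.mulVec h j| := le_abs_self _
      _ ≤ norm2 (A.mulVec u) * norm2 (A.mulVec h) := CS_inner_le _ _
      _ ≤ (Real.sqrt (1 + δ) * norm2 u) * (2 * ε) := by
          apply mul_le_mul hAu hAh (CS_norm2_nonneg _)
          exact mul_nonneg (Real.sqrt_nonneg _) hP0
  have hmv_split : ∀ j, A.mulVec h j = A.mulVec u j + A.mulVec r j := by
    intro j
    calc A.mulVec h j = A.mulVec (fun jj => u jj + r jj) j := by rw [← hur]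
      _ = A.mulVec (u + r) j := rfl
      _ = A.mulVec u j + A.mulVec r j := by rw [Matrix.mulVec_add]; rfl
  have hdecomp : ∑ j, (A.mulVec u) j ^ 2
      = (∑ j, A.mulVec u j * A.mulVec h j) - ∑ j, A.mulVec u j * A.mulVec r j := by
    rw [← Finset.sum_sub_distrib]
    refine Finset.sum_congr rfl fun j _ => ?_
    rw [hmv_split j]; ring
  have hcross1 : |∑ j, A.mulVec v1 j * A.mulVec r j| ≤ δ * norm2 v1 * K := by
    apply hcross v1 T0 (CS_spt_restr _ _)
    · exact disjoint_compl_right.mono_right Finset.sdiff_subset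
    · omega
  have hcross2 : |∑ j, A.mulVec v2 j * A.mulVec r j| ≤ δ * norm2 v2 * K := by
    apply hcross v2 Δ1 (CS_spt_restr _ _)
    · exact Finset.disjoint_sdiff
    · omega
  have hmv_u : ∀ j, A.mulVec u j = A.mulVec v1 j + A.mulVec v2 j := by
    intro j
    have e : u = v1 + v2 := funext fun jj => huv jj
    calc A.mulVec u j = A.mulVec (v1 + v2) j := by rw [e]
      _ = A.mulVec v1 j + A.mulVec v2 j := by rw [Matrix.mulVec_add]; rfl
  have hcross_tot : |∑ j, A.mulVec u j * A.mulVec r j|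
      ≤ δ * (norm2 v1 + norm2 v2) * K := by
    have e : ∑ j, A.mulVec u j * A.mulVec r j
        = (∑ j, A.mulVec v1 j * A.mulVec r j) + ∑ j, A.mulVec v2 j * A.mulVec r j := by
      rw [← Finset.sum_add_distrib]
      refine Finset.sum_congr rfl fun j _ => ?_
      rw [hmv_u j]; ring
    rw [e]
    calc |(∑ j, A.mulVec v1 j * A.mulVec r j) + ∑ j, A.mulVec v2 j * A.mulVec r j|
        ≤ |∑ j, A.mulVec v1 j * A.mulVec r j| + |∑ j, A.mulVec v2 j * A.mulVec r j| :=
          abs_add_le _ _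
      _ ≤ δ * norm2 v1 * K + δ * norm2 v2 * K := add_le_add hcross1 hcross2
      _ = δ * (norm2 v1 + norm2 v2) * K := by ring
  have hmain : (1 - δ) * norm2 u ^ 2
      ≤ (Real.sqrt (1 + δ) * norm2 u) * (2 * ε)
        + δ * Real.sqrt 2 * norm2 u * norm2 u := by
    have h2 : ∑ j, (A.mulVec u) j ^ 2
        ≤ (Real.sqrt (1 + δ) * norm2 u) * (2 * ε) + δ * (norm2 v1 + norm2 v2) * K := by
      rw [hdecomp]
      have h3 := neg_abs_le (∑ j, A.mulVec u j * A.mulVec r j)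
      linarith [hinner, hcross_tot]
    have h4 : δ * (norm2 v1 + norm2 v2) * K ≤ δ * Real.sqrt 2 * norm2 u * norm2 u := by
      calc δ * (norm2 v1 + norm2 v2) * K ≤ δ * (Real.sqrt 2 * norm2 u) * K := by
            apply mul_le_mul_of_nonneg_right (mul_le_mul_of_nonneg_left hab hδ0) hK0
        _ ≤ δ * (Real.sqrt 2 * norm2 u) * norm2 u := by
            apply mul_le_mul_of_nonneg_left hKP
            exact mul_nonneg hδ0 (mul_nonneg (Real.sqrt_nonneg _) hP0)
        _ = δ * Real.sqrt 2 * norm2 u * norm2 u := by ring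
    linarith [hlow]
  -- numeric endgame
  have hs2 : Real.sqrt 2 < 1.4145031 := by
    nlinarith [Real.sq_sqrt (by norm_num : (0:ℝ) ≤ 2), Real.sqrt_nonneg 2]
  have hQ : Real.sqrt (1 + δ) ≤ 1.09875 := by
    have h1 : 1 + δ ≤ 1.2072515625 := by nlinarith [hδ, hs2]
    calc Real.sqrt (1 + δ) ≤ Real.sqrt 1.2072515625 := Real.sqrt_le_sqrt h1
      _ = 1.09875 := by
        rw [show (1.2072515625:ℝ) = 1.09875 ^ 2 by norm_num,
          Real.sqrt_sq (by norm_num)]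
  have hD : (1:ℝ)/2 ≤ 1 - δ - Real.sqrt 2 * δ := by
    nlinarith [Real.sq_sqrt (by norm_num : (0:ℝ) ≤ 2), Real.sqrt_nonneg 2, hδ, hδ0]
  have hP879 : norm2 u ≤ 8.79 * ε := by
    rcases le_or_gt (norm2 u) 0 with hP | hP
    · linarith
    · have h5 : (1 - δ - Real.sqrt 2 * δ) * norm2 u * norm2 u
          ≤ (2 * Real.sqrt (1 + δ) * ε) * norm2 u := by nlinarith [hmain]
      have h6 : (1 - δ - Real.sqrt 2 * δ) * norm2 u ≤ 2 * Real.sqrt (1 + δ) * ε :=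
        le_of_mul_le_mul_right (by linarith [h5]) hP
      have h7 : (1/2) * norm2 u ≤ (1 - δ - Real.sqrt 2 * δ) * norm2 u :=
        mul_le_mul_of_nonneg_right hD hP0
      have h8 : 2 * Real.sqrt (1 + δ) * ε ≤ 2 * 1.09875 * ε := by
        apply mul_le_mul_of_nonneg_right _ hε0
        linarith [hQ]
      linarith
  -- conclusion
  have hiT01 : i ∈ T01 := Finset.mem_union_left _ (hΔT0 hiΔ)
  have hui : u i = h i := by simp [hudef, restr, hiT01]
  have hhi : |h i| ≤ norm2 u := by
    rw [← hui]
    exact CS_abs_le_norm2 u i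
  have htri : |x i| ≤ |xhat i| + |h i| := by
    have e : x i = xhat i + -(h i) := by rw [hhdef]; ring
    calc |x i| = |xhat i + -(h i)| := by rw [← e]
      _ ≤ |xhat i| + |-(h i)| := abs_add_le _ _
      _ = |xhat i| + |h i| := by rw [abs_neg]
  linarith [hb1, hbi, hP879, hhi, htri]
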